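/- Let δ ∈ (0,1) and let (δ_k), (l_k) be strictly increasing sequences of positive reals with 17δ/16 < l₁/8. Let f₁, f₂ : ℂ → ℂ be entire functions such that |e^{f₁(z)} − δ_k| < l_k/4 for every z ∈ B_k and every k ∈ ℕ, and e^{Re f₂(w)} < 17/16 for every w ∈ ℝ. Then for every k ∈ ℕ, F(B_k') ⊆ {(z,w) ∈ ℂ×ℝ : |z − δ_k| ≤ l_k/2 and |w| < 17/16} ⊆ B_k'; in particular each B_k' is forward invariant under F. -/

import Mathlib

open Set Filter Topology

/-- With `F(z,w) = (e^{f₁(z)} + δ e^{Re f₂(w)}, e^{Re f₂(w)})` and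
`|e^{f₁(z)} - δₖ| < lₖ/4` on `Bₖ`, each polydisc `Bₖ'` is mapped by `F` into a smaller
polydisc inside itself; in particular each `Bₖ'` is forward invariant. -/
theorem F_maps_Bk_into_itself
    (δ : ℝ) (hδ : δ ∈ Set.Ioo (0 : ℝ) 1)
    (δs ls : ℕ → ℝ)
    (hδmono : StrictMono δs) (hδpos : ∀ k, 0 < δs k)
    (hlmono : StrictMono ls) (hlpos : ∀ k, 0 < ls k)
    (hδl : 17 * δ / 16 < ls 0 / 8)
    (f₁ f₂ : ℂ → ℂ) (hf₁ : Differentiable ℂ f₁) (hf₂ : Differentiable ℂ f₂)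
    (hB : ∀ k, ∀ z : ℂ, ‖z - δs k‖ ≤ ls k →
      ‖Complex.exp (f₁ z) - δs k‖ < ls k / 4)
    (hR : ∀ w : ℝ, Real.exp ((f₂ (w : ℂ)).re) < 17 / 16)
    (F : ℂ × ℝ → ℂ × ℝ)
    (hF : ∀ p : ℂ × ℝ,
      F p = (Complex.exp (f₁ p.1) + (δ * Real.exp ((f₂ (p.2 : ℂ)).re) : ℝ),
             Real.exp ((f₂ (p.2 : ℂ)).re)))
    (B' : ℕ → Set (ℂ × ℝ))
    (hB' : ∀ k, B' k = {p : ℂ × ℝ |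
      ‖p.1 - δs k‖ ≤ ls k ∧ |p.2| < ls k / (8 * δ)}) :
    ∀ k, (F '' B' k ⊆
        {p : ℂ × ℝ | ‖p.1 - δs k‖ ≤ ls k / 2 ∧ |p.2| < 17 / 16}) ∧
      ({p : ℂ × ℝ | ‖p.1 - δs k‖ ≤ ls k / 2 ∧ |p.2| < 17 / 16} ⊆ B' k) ∧
      F '' B' k ⊆ B' k := by
  obtain ⟨hδ0, hδ1⟩ := hδ
  intro k
  have hl0k : ls 0 ≤ ls k := hlmono.monotone (Nat.zero_le k)
  have h1 : F '' B' k ⊆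
      {p : ℂ × ℝ | ‖p.1 - δs k‖ ≤ ls k / 2 ∧ |p.2| < 17 / 16} := by
    rintro _ ⟨p, hp, rfl⟩
    rw [hB' k] at hp
    obtain ⟨hp1, hp2⟩ := hp
    rw [hF p]
    constructor
    · have h1 := hB k p.1 hp1
      have hexp : Real.exp ((f₂ (p.2 : ℂ)).re) < 17 / 16 := hR p.2
      have hexp0 : 0 < Real.exp ((f₂ (p.2 : ℂ)).re) := Real.exp_pos _
      have habs : ‖((δ * Real.exp ((f₂ (p.2 : ℂ)).re) : ℝ) : ℂ)‖
          = δ * Real.exp ((f₂ (p.2 : ℂ)).re) := by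
        rw [Complex.norm_real, Real.norm_eq_abs, abs_of_pos (by positivity)]
      calc ‖Complex.exp (f₁ p.1)
            + ((δ * Real.exp ((f₂ (p.2 : ℂ)).re) : ℝ) : ℂ) - δs k‖
          ≤ ‖Complex.exp (f₁ p.1) - δs k‖
            + ‖((δ * Real.exp ((f₂ (p.2 : ℂ)).re) : ℝ) : ℂ)‖ := by
            have := norm_add_le (Complex.exp (f₁ p.1) - δs k)
              ((δ * Real.exp ((f₂ (p.2 : ℂ)).re) : ℝ) : ℂ)
            calc ‖Complex.exp (f₁ p.1)
                  + ((δ * Real.exp ((f₂ (p.2 : ℂ)).re) : ℝ) : ℂ) - δs k‖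
                = ‖(Complex.exp (f₁ p.1) - δs k)
                  + ((δ * Real.exp ((f₂ (p.2 : ℂ)).re) : ℝ) : ℂ)‖ := by ring_nf
              _ ≤ _ := this
        _ ≤ ls k / 4 + δ * (17/16) := by
            rw [habs]
            have : δ * Real.exp ((f₂ (p.2 : ℂ)).re) ≤ δ * (17/16) :=
              mul_le_mul_of_nonneg_left hexp.le hδ0.le
            linarith
        _ ≤ ls k / 2 := by nlinarith
    · rw [abs_of_pos (Real.exp_pos _)]; exact hR p.2
  refine ⟨h1, ?_, ?_⟩
  · intro p hp
    obtain ⟨hp1, hp2⟩ := hp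
    rw [hB' k]
    refine ⟨le_trans hp1 (by linarith [hlpos k]), lt_trans hp2 ?_⟩
    rw [lt_div_iff₀ (by positivity)]
    nlinarith
  · intro p hp
    have := h1 hp
    rw [hB' k]
    refine ⟨le_trans this.1 (by linarith [hlpos k]), lt_trans this.2 ?_⟩
    rw [lt_div_iff₀ (by positivity)]
    nlinarith
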